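/- Let φ : M → S^n be a polyharmonic map of even order k = 2s ≥ 4, expressed in the equator coordinates on S^n with f = φ^n − π/2, and let (F^k)^n be the n-th component of the local right-hand side of the polyharmonic map equation Δu_{k−2} = F^k. Then on any open set D whose closure is compact and contained in the chart domain, there exists a constant C > 0 such that |(F^k)^n| ≤ C( |f| + |df| + Σ_{ℓ=0}^{k−2} |u^n_ℓ| + Σ_{ℓ=0}^{k−3} |v^n_ℓ| + |∇u^n_{k−2}| ). -/

import Mathlib

noncomputable section

open scoped BigOperators

namespace Polyharm

/-- Partial derivative of a scalar function on `ℝ^d` in the `i`-th coordinate direction. -/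
def pd {d : ℕ} (i : Fin d) (f : (Fin d → ℝ) → ℝ) (x : Fin d → ℝ) : ℝ :=
  fderiv ℝ f x (Pi.single i 1)

/-- Euclidean norm of a finite family of real numbers. -/
def vnorm {ι : Type} [Fintype ι] (f : ι → ℝ) : ℝ :=
  Real.sqrt (∑ i, f i ^ 2)

/-- Local-coordinate data for maps between Riemannian manifolds: the inverse metric
`g^{ij}` and the Christoffel symbols `Γ^k_{ij}` of a chart of the domain `(M,g)`, and
the Christoffel symbols `Γ^α_{βγ}` of a chart of the target `(N,h)`. -/
structure ChartData (m n : ℕ) where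
  ginv : (Fin m → ℝ) → Fin m → Fin m → ℝ
  ΓM : (Fin m → ℝ) → Fin m → Fin m → Fin m → ℝ
  ΓN : (Fin n → ℝ) → Fin n → Fin n → Fin n → ℝ

variable {m n : ℕ}

/-- Smoothness of the domain data. -/
def ChartData.SmoothDomain (P : ChartData m n) : Prop :=
  (∀ i j, ContDiff ℝ (⊤ : ℕ∞) fun x => P.ginv x i j) ∧
  (∀ k i j, ContDiff ℝ (⊤ : ℕ∞) fun x => P.ΓM x k i j)

/-- Smoothness of the target Christoffel symbols. -/
def ChartData.SmoothTarget (P : ChartData m n) : Prop :=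
  ∀ α β γ, ContDiff ℝ (⊤ : ℕ∞) fun y => P.ΓN y α β γ

/-- The chart data comes from Riemannian metrics: `g^{ij}` is symmetric and positive
definite, and the Christoffel symbols are symmetric in their lower indices. -/
def ChartData.Riemannian (P : ChartData m n) : Prop :=
  (∀ x i j, P.ginv x i j = P.ginv x j i) ∧
  (∀ x (v : Fin m → ℝ), v ≠ 0 → 0 < ∑ i, ∑ j, P.ginv x i j * v i * v j) ∧
  (∀ x k i j, P.ΓM x k i j = P.ΓM x k j i) ∧
  (∀ y α β γ, P.ΓN y α β γ = P.ΓN y α γ β)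

/-- The Laplace–Beltrami operator on scalar functions:
`-Δ f = g^{ij} ∂²f/∂x^i∂x^j - g^{ij} Γ^k_{ij} ∂f/∂x^k`. -/
def lap (P : ChartData m n) (f : (Fin m → ℝ) → ℝ) (x : Fin m → ℝ) : ℝ :=
  -((∑ i, ∑ j, P.ginv x i j * pd i (fun z => pd j f z) x)
    - ∑ i, ∑ j, ∑ k, P.ginv x i j * P.ΓM x k i j * pd k f x)

/-- `φ_i^β = ∂φ^β/∂x^i`. -/
def dphi (φ : (Fin m → ℝ) → Fin n → ℝ) (x : Fin m → ℝ) (i : Fin m) (β : Fin n) : ℝ :=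
  pd i (fun z => φ z β) x

/-- `⟨dφ^β, dψ^γ⟩ = g^{ij} φ_i^β ψ_j^γ`. -/
def dpair (P : ChartData m n) (φ ψ : (Fin m → ℝ) → Fin n → ℝ) (x : Fin m → ℝ)
    (β γ : Fin n) : ℝ :=
  ∑ i, ∑ j, P.ginv x i j * dphi φ x i β * dphi ψ x j γ

/-- Components `R^α_{δβγ}` of the curvature tensor of the target, with the sign
convention `R(∂/∂y^β, ∂/∂y^γ)∂/∂y^δ = R^α_{δβγ} ∂/∂y^α` of the paper. -/
def Rc (P : ChartData m n) (y : Fin n → ℝ) (α δ β γ : Fin n) : ℝ :=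
  pd β (fun z => P.ΓN z α γ δ) y - pd γ (fun z => P.ΓN z α β δ) y
    + ∑ μ, (P.ΓN y α β μ * P.ΓN y μ γ δ - P.ΓN y α γ μ * P.ΓN y μ β δ)

/-- `2S^α_{βωϑ} = ∂Γ^α_{βϑ}/∂y^ω + Γ^γ_{βϑ}Γ^α_{ωγ} + ∂Γ^α_{ωϑ}/∂y^β + Γ^γ_{ωϑ}Γ^α_{βγ}`. -/
def Scoef (P : ChartData m n) (y : Fin n → ℝ) (α β ω ϑ : Fin n) : ℝ :=
  (pd ω (fun z => P.ΓN z α β ϑ) y + (∑ γ, P.ΓN y γ β ϑ * P.ΓN y α ω γ)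
    + pd β (fun z => P.ΓN z α ω ϑ) y + ∑ γ, P.ΓN y γ ω ϑ * P.ΓN y α β γ) / 2

/-- The operator
`A^α(η,ξ) = ξ_i^ϑ(-2 g^{ij} φ_j^β Γ^α_{βϑ}) + η^ϑ((Δφ^β)Γ^α_{βϑ} - g^{ij} φ_j^β φ_i^ω S^α_{βωϑ})`. -/
def Aop (P : ChartData m n) (φ : (Fin m → ℝ) → Fin n → ℝ) (η : Fin n → ℝ)
    (ξ : Fin m → Fin n → ℝ) (x : Fin m → ℝ) (α : Fin n) : ℝ :=
  (∑ ϑ, ∑ i, ξ i ϑ * (-2 * ∑ j, ∑ β, P.ginv x i j * dphi φ x j β * P.ΓN (φ x) α β ϑ))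
    + ∑ ϑ, η ϑ * ((∑ β, lap P (fun z => φ z β) x * P.ΓN (φ x) α β ϑ)
        - ∑ i, ∑ j, ∑ β, ∑ ω,
            P.ginv x i j * dphi φ x j β * dphi φ x i ω * Scoef P (φ x) α β ω ϑ)

/-- The operator `A` applied to (the components of) a section `σ` of `φ⁻¹TN`:
`A(σ, ∂σ)`. -/
def Asec (P : ChartData m n) (φ σ : (Fin m → ℝ) → Fin n → ℝ) (x : Fin m → ℝ)
    (α : Fin n) : ℝ :=
  Aop P φ (σ x) (fun i ϑ => pd i (fun z => σ z ϑ) x) x α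

/-- Components of the tension field `τ^α(φ) = -Δφ^α + g^{ij} Γ^α_{ϑβ} φ_i^ϑ φ_j^β`. -/
def tension (P : ChartData m n) (φ : (Fin m → ℝ) → Fin n → ℝ) (x : Fin m → ℝ)
    (α : Fin n) : ℝ :=
  -(lap P (fun z => φ z α) x)
    + ∑ i, ∑ j, ∑ ϑ, ∑ β,
        P.ginv x i j * P.ΓN (φ x) α ϑ β * dphi φ x i ϑ * dphi φ x j β

/-- The components `u_j` of `Δ̄^j τ(φ)`: `u_0 = τ(φ)` and
`u_{j+1} = Δ u_j + A(u_j, ∂u_j)` (local expression of the rough Laplacian). -/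
def uvar (P : ChartData m n) (φ : (Fin m → ℝ) → Fin n → ℝ) :
    ℕ → (Fin m → ℝ) → Fin n → ℝ
  | 0 => tension P φ
  | j+1 => fun x α => lap P (fun z => uvar P φ j z α) x + Asec P φ (uvar P φ j) x α

/-- `v_j = du_j`, i.e. `v_{j i}^α = ∂u_j^α/∂x^i`. -/
def vvar (P : ChartData m n) (φ : (Fin m → ℝ) → Fin n → ℝ) (j : ℕ) (x : Fin m → ℝ)
    (i : Fin m) (α : Fin n) : ℝ :=
  pd i (fun z => uvar P φ j z α) x

/-- Components of the pull-back covariant derivative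
`(∇̄_{∂_i} σ)^γ = ∂σ^γ/∂x^i + Γ^γ_{βδ}(φ) φ_i^β σ^δ`. -/
def covD (P : ChartData m n) (φ σ : (Fin m → ℝ) → Fin n → ℝ) (i : Fin m)
    (x : Fin m → ℝ) (γ : Fin n) : ℝ :=
  pd i (fun z => σ z γ) x + ∑ β, ∑ δ, P.ΓN (φ x) γ β δ * dphi φ x i β * σ x δ

/-- `(Tr_g R^N(X, dφ(·))dφ(·))^α`. -/
def trRphi (P : ChartData m n) (φ X : (Fin m → ℝ) → Fin n → ℝ) (x : Fin m → ℝ)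
    (α : Fin n) : ℝ :=
  ∑ i, ∑ j, ∑ β, ∑ γ, ∑ δ,
    P.ginv x i j * Rc P (φ x) α δ β γ * X x β * dphi φ x i γ * dphi φ x j δ

/-- `(Tr_g R^N(dφ(·), X)dφ(·))^α`. -/
def trRphi2 (P : ChartData m n) (φ X : (Fin m → ℝ) → Fin n → ℝ) (x : Fin m → ℝ)
    (α : Fin n) : ℝ :=
  ∑ i, ∑ j, ∑ β, ∑ γ, ∑ δ,
    P.ginv x i j * Rc P (φ x) α δ β γ * dphi φ x i β * X x γ * dphi φ x j δ

/-- `(Tr_g R^N(∇̄_{(·)}W, Z)dφ(·))^α`. -/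
def trRD (P : ChartData m n) (φ W Z : (Fin m → ℝ) → Fin n → ℝ) (x : Fin m → ℝ)
    (α : Fin n) : ℝ :=
  ∑ i, ∑ j, ∑ β, ∑ γ, ∑ δ,
    P.ginv x i j * Rc P (φ x) α δ β γ * covD P φ W i x β * Z x γ * dphi φ x j δ

/-- `(Tr_g R^N(W, ∇̄_{(·)}Z)dφ(·))^α`. -/
def trRD2 (P : ChartData m n) (φ W Z : (Fin m → ℝ) → Fin n → ℝ) (x : Fin m → ℝ)
    (α : Fin n) : ℝ :=
  ∑ i, ∑ j, ∑ β, ∑ γ, ∑ δ,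
    P.ginv x i j * Rc P (φ x) α δ β γ * W x β * covD P φ Z i x γ * dphi φ x j δ

/-- Local components of Maeta's `k`-tension field `τ_k(φ)`, for `k = 2s`:
`τ_{2s}(φ) = Δ̄^{2s-1}τ(φ) - R^N(Δ̄^{2s-2}τ(φ), dφ(e_j))dφ(e_j)
  - Σ_{ℓ=1}^{s-1}( R^N(∇̄_{e_j}Δ̄^{s+ℓ-2}τ(φ), Δ̄^{s-ℓ-1}τ(φ))dφ(e_j)
                 - R^N(Δ̄^{s+ℓ-2}τ(φ), ∇̄_{e_j}Δ̄^{s-ℓ-1}τ(φ))dφ(e_j) )`,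
and for `k = 2s+1`:
`τ_{2s+1}(φ) = Δ̄^{2s}τ(φ) - R^N(Δ̄^{2s-1}τ(φ), dφ(e_j))dφ(e_j)
  - Σ_{ℓ=1}^{s-1}( R^N(∇̄_{e_j}Δ̄^{s+ℓ-1}τ(φ), Δ̄^{s-ℓ-1}τ(φ))dφ(e_j)
                 - R^N(Δ̄^{s+ℓ-1}τ(φ), ∇̄_{e_j}Δ̄^{s-ℓ-1}τ(φ))dφ(e_j) )
  - R^N(∇̄_{e_j}Δ̄^{s-1}τ(φ), Δ̄^{s-1}τ(φ))dφ(e_j)`. -/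
def tauK (P : ChartData m n) (φ : (Fin m → ℝ) → Fin n → ℝ) (k : ℕ) (x : Fin m → ℝ)
    (α : Fin n) : ℝ :=
  if Even k then
    uvar P φ (k-1) x α - trRphi P φ (uvar P φ (k-2)) x α
      - ∑ ℓ ∈ Finset.Icc 1 (k/2 - 1),
          (trRD P φ (uvar P φ (k/2 + ℓ - 2)) (uvar P φ (k/2 - ℓ - 1)) x α
            - trRD2 P φ (uvar P φ (k/2 + ℓ - 2)) (uvar P φ (k/2 - ℓ - 1)) x α)
  else
    uvar P φ (k-1) x α - trRphi P φ (uvar P φ (k-2)) x α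
      - (∑ ℓ ∈ Finset.Icc 1 (k/2 - 1),
          (trRD P φ (uvar P φ (k/2 + ℓ - 1)) (uvar P φ (k/2 - ℓ - 1)) x α
            - trRD2 P φ (uvar P φ (k/2 + ℓ - 1)) (uvar P φ (k/2 - ℓ - 1)) x α))
      - trRD P φ (uvar P φ (k/2 - 1)) (uvar P φ (k/2 - 1)) x α

/-- Components `(∇dφ)(∂_i,∂_j)^α` of the second fundamental form of `φ`. -/
def sff (P : ChartData m n) (φ : (Fin m → ℝ) → Fin n → ℝ) (x : Fin m → ℝ)
    (i j : Fin m) (α : Fin n) : ℝ :=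
  pd i (fun z => dphi φ z j α) x - (∑ k, P.ΓM x k i j * dphi φ x k α)
    + ∑ β, ∑ γ, P.ΓN (φ x) α β γ * dphi φ x i β * dphi φ x j γ

/-- Christoffel symbols `Γ^α_{βγ}` of the round sphere `S^{d+1}` in the equator
coordinates `S^{d+1}∖{N,S} = (S^d × (0,π), sin²s·g̃ + ds²)`: here `gt = g̃` and
`Γt = Γ̃` are the metric and the Christoffel symbols of the equator `S^d`, the last
coordinate is `s`, and
`Γ^a_{bc} = Γ̃^a_{bc}`, `Γ^n_{bc} = -½ sin(2s) g̃_{bc}`,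
`Γ^a_{nn} = Γ^n_{nn} = Γ^n_{bn} = 0`, `Γ^a_{bn} = (cos s/sin s)δ^a_b`. -/
def sphereΓ (d : ℕ) (gt : (Fin d → ℝ) → Fin d → Fin d → ℝ)
    (Γt : (Fin d → ℝ) → Fin d → Fin d → Fin d → ℝ) :
    (Fin (d+1) → ℝ) → Fin (d+1) → Fin (d+1) → Fin (d+1) → ℝ :=
  fun y α β γ =>
    let s : ℝ := y (Fin.last d)
    let yt : Fin d → ℝ := fun a => y (Fin.castSucc a)
    if hα : (α : ℕ) < d then
      if hβ : (β : ℕ) < d then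
        if hγ : (γ : ℕ) < d then Γt yt ⟨α.1, hα⟩ ⟨β.1, hβ⟩ ⟨γ.1, hγ⟩
        else (Real.cos s / Real.sin s) * (if (α : ℕ) = (β : ℕ) then 1 else 0)
      else
        if (γ : ℕ) < d then
          (Real.cos s / Real.sin s) * (if (α : ℕ) = (γ : ℕ) then 1 else 0)
        else 0
    else
      if hβ : (β : ℕ) < d then
        if hγ : (γ : ℕ) < d then -(1/2) * Real.sin (2*s) * gt yt ⟨β.1, hβ⟩ ⟨γ.1, hγ⟩
        else 0
      else 0

/-- Components of the round metric `sin²s·g̃ + ds²` of `S^{d+1}` in equator coordinates. -/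
def sphereMet (d : ℕ) (gt : (Fin d → ℝ) → Fin d → Fin d → ℝ) :
    (Fin (d+1) → ℝ) → Fin (d+1) → Fin (d+1) → ℝ :=
  fun y β γ =>
    let s : ℝ := y (Fin.last d)
    let yt : Fin d → ℝ := fun a => y (Fin.castSucc a)
    if hβ : (β : ℕ) < d then
      if hγ : (γ : ℕ) < d then Real.sin s ^ 2 * gt yt ⟨β.1, hβ⟩ ⟨γ.1, hγ⟩ else 0
    else if (γ : ℕ) < d then 0 else 1

/-- `gt` is a Riemannian metric on the chart of `S^d` and `Γt` is the family of
Christoffel symbols of its Levi-Civita connection. -/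
def LeviCivita (d : ℕ) (gt : (Fin d → ℝ) → Fin d → Fin d → ℝ)
    (Γt : (Fin d → ℝ) → Fin d → Fin d → Fin d → ℝ) : Prop :=
  (∀ y a b, gt y a b = gt y b a) ∧
  (∀ y (v : Fin d → ℝ), v ≠ 0 → 0 < ∑ a, ∑ b, gt y a b * v a * v b) ∧
  (∀ y a b c, Γt y a b c = Γt y a c b) ∧
  (∀ y a b c, pd c (fun z => gt z a b) y
    = (∑ e, gt y e b * Γt y e c a) + ∑ e, gt y a e * Γt y e c b)

/-- `E^α_{βδϑη} = R^α_{βγδ}Γ^γ_{ϑη} + R^α_{βγϑ}Γ^γ_{δη}`. -/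
def Ecoef (P : ChartData m n) (y : Fin n → ℝ) (α β δ ϑ η : Fin n) : ℝ :=
  ∑ γ, (Rc P y α β γ δ * P.ΓN y γ ϑ η + Rc P y α β γ ϑ * P.ΓN y γ δ η)

/-- `⟨v^γ, dφ^β⟩ = g^{ij} v_i^γ φ_j^β`. -/
def vpair (P : ChartData m n) (φ : (Fin m → ℝ) → Fin n → ℝ) (v : Fin m → Fin n → ℝ)
    (x : Fin m → ℝ) (γ β : Fin n) : ℝ :=
  ∑ i, ∑ j, P.ginv x i j * v i γ * dphi φ x j β

/-- The explicit local right-hand side `F^k` of the polyharmonic map equation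
`Δu_{k-2}^α = (F^k)^α` for even order `k = 2s ≥ 4`:
`(F^k)^α = -A_{k-1}^α - u_{k-2}^δ⟨dφ^γ,dφ^β⟩R^α_{βγδ}
 + Σ_{ℓ=1}^{k/2-1}( u^δ_{k/2-ℓ-1}⟨v^γ_{k/2+ℓ-2},dφ^β⟩R^α_{βγδ}
   + u^ϑ_{k/2+ℓ-2}u^δ_{k/2-ℓ-1}⟨dφ^η,dφ^β⟩E^α_{βδϑη}
   + u^δ_{k/2+ℓ-2}⟨v^γ_{k/2-ℓ-1},dφ^β⟩R^α_{βγδ} )`. -/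
def FkEven (P : ChartData m n) (φ : (Fin m → ℝ) → Fin n → ℝ) (k : ℕ) (x : Fin m → ℝ)
    (α : Fin n) : ℝ :=
  -Asec P φ (uvar P φ (k-2)) x α
    - (∑ δ, ∑ γ, ∑ β, uvar P φ (k-2) x δ * dpair P φ φ x γ β * Rc P (φ x) α β γ δ)
    + ∑ ℓ ∈ Finset.Icc 1 (k/2 - 1),
        ((∑ δ, ∑ γ, ∑ β, uvar P φ (k/2 - ℓ - 1) x δ *
            vpair P φ (vvar P φ (k/2 + ℓ - 2) x) x γ β * Rc P (φ x) α β γ δ)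
          + (∑ ϑ, ∑ δ, ∑ η, ∑ β, uvar P φ (k/2 + ℓ - 2) x ϑ * uvar P φ (k/2 - ℓ - 1) x δ *
              dpair P φ φ x η β * Ecoef P (φ x) α β δ ϑ η)
          + ∑ δ, ∑ γ, ∑ β, uvar P φ (k/2 + ℓ - 2) x δ *
              vpair P φ (vvar P φ (k/2 - ℓ - 1) x) x γ β * Rc P (φ x) α β γ δ)

/-- The explicit local right-hand side `F^k` of the polyharmonic map equation
for even `k = 2s ≥ 4`, as written in the sphere computation of the paper:
`(F^k)^n = -A^n_{k-1} - u^δ_{k-2}⟨dφ^γ,dφ^β⟩R^n_{βγδ}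
 - Σ_{ℓ=1}^{k/2-1}( u^δ_{k/2-ℓ-1}⟨v^γ_{k/2+ℓ-2},dφ^β⟩R^n_{βγδ}
   + u^ϑ_{k/2+ℓ-2}u^δ_{k/2-ℓ-1}⟨dφ^η,dφ^β⟩E^n_{βδϑη}
   + u^δ_{k/2+ℓ-2}⟨v^γ_{k/2-ℓ-1},dφ^β⟩R^n_{βγδ} )`. -/
def FkEvenSph (P : ChartData m n) (φ : (Fin m → ℝ) → Fin n → ℝ) (k : ℕ)
    (x : Fin m → ℝ) (α : Fin n) : ℝ :=
  -Asec P φ (uvar P φ (k-2)) x α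
    - (∑ δ, ∑ γ, ∑ β, uvar P φ (k-2) x δ * dpair P φ φ x γ β * Rc P (φ x) α β γ δ)
    - ∑ ℓ ∈ Finset.Icc 1 (k/2 - 1),
        ((∑ δ, ∑ γ, ∑ β, uvar P φ (k/2 - ℓ - 1) x δ *
            vpair P φ (vvar P φ (k/2 + ℓ - 2) x) x γ β * Rc P (φ x) α β γ δ)
          + (∑ ϑ, ∑ δ, ∑ η, ∑ β, uvar P φ (k/2 + ℓ - 2) x ϑ * uvar P φ (k/2 - ℓ - 1) x δ *
              dpair P φ φ x η β * Ecoef P (φ x) α β δ ϑ η)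
          + ∑ δ, ∑ γ, ∑ β, uvar P φ (k/2 + ℓ - 2) x δ *
              vpair P φ (vvar P φ (k/2 - ℓ - 1) x) x γ β * Rc P (φ x) α β γ δ)


section AuxPolyharm
open Real

lemma contDiff_pd {N : ℕ} {f : (Fin N → ℝ) → ℝ} (hf : ContDiff ℝ (⊤ : ℕ∞) f) (i : Fin N) :
    ContDiff ℝ (⊤ : ℕ∞) (pd i f) := by
  have h1 : ContDiff ℝ (⊤ : ℕ∞) (fderiv ℝ f) := hf.fderiv_right (by simp)
  exact (ContinuousLinearMap.apply ℝ ℝ (Pi.single i 1)).contDiff.comp h1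

lemma pd_congr {N : ℕ} {f g : (Fin N → ℝ) → ℝ} (h : ∀ z, f z = g z) (i : Fin N) (x) :
    pd i f x = pd i g x := by rw [show f = g from funext h]

lemma pd_const {N : ℕ} (c : ℝ) (i : Fin N) (x) : pd i (fun _ => c) x = 0 := by
  simp [pd]

lemma pd_sub_const {N : ℕ} (f : (Fin N → ℝ) → ℝ) (c : ℝ) (i : Fin N) (x) :
    pd i (fun w => f w - c) x = pd i f x := by
  simp [pd, fderiv_sub_const]

lemma pd_mul {N : ℕ} {f g : (Fin N → ℝ) → ℝ} {x} (hf : DifferentiableAt ℝ f x)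
    (hg : DifferentiableAt ℝ g x) (i : Fin N) :
    pd i (fun z => f z * g z) x = pd i f x * g x + f x * pd i g x := by
  simp only [pd, fderiv_fun_mul hf hg, ContinuousLinearMap.add_apply,
    ContinuousLinearMap.smul_apply, smul_eq_mul]
  ring

lemma pd_const_mul {N : ℕ} {f : (Fin N → ℝ) → ℝ} {x} (hf : DifferentiableAt ℝ f x)
    (c : ℝ) (i : Fin N) :
    pd i (fun z => c * f z) x = c * pd i f x := by
  rw [pd_mul (differentiableAt_const c) hf i, pd_const]; ring

def lproj (N : ℕ) : (Fin (N+1) → ℝ) →L[ℝ] ℝ := ContinuousLinearMap.proj (Fin.last N)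

def tproj (N : ℕ) : (Fin (N+1) → ℝ) →L[ℝ] (Fin N → ℝ) :=
  ContinuousLinearMap.pi fun e => ContinuousLinearMap.proj e.castSucc

lemma pd_mul_const {N : ℕ} {f : (Fin N → ℝ) → ℝ} {x} (hf : DifferentiableAt ℝ f x)
    (c : ℝ) (i : Fin N) :
    pd i (fun z => f z * c) x = pd i f x * c := by
  rw [pd_mul hf (differentiableAt_const c) i, pd_const]; ring

lemma pd_scalar_comp {N : ℕ} {A : ℝ → ℝ} {A' : ℝ} {y : Fin (N+1) → ℝ}
    (hA : HasDerivAt A A' (y (Fin.last N))) (i : Fin (N+1)) :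
    pd i (fun z => A (z (Fin.last N))) y = A' * (Pi.single i 1 : Fin (N+1) → ℝ) (Fin.last N) := by
  have hp : HasFDerivAt (fun z : Fin (N+1) → ℝ => z (Fin.last N)) (lproj N) y :=
    (lproj N).hasFDerivAt.congr_of_eventuallyEq (Filter.Eventually.of_forall fun z => rfl)
  have h2 : HasFDerivAt (fun z : Fin (N+1) → ℝ => A (z (Fin.last N))) (A' • lproj N) y :=
    hA.comp_hasFDerivAt y hp
  rw [pd, h2.fderiv, ContinuousLinearMap.smul_apply]
  simp [lproj]

lemma single_comp_castSucc_last {N : ℕ} :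
    (fun e : Fin N => (Pi.single (Fin.last N) 1 : Fin (N+1) → ℝ) (Fin.castSucc e)) = 0 := by
  funext e
  exact Pi.single_eq_of_ne (by simp [Fin.ext_iff]; omega) 1

lemma single_comp_castSucc {N : ℕ} (a : Fin N) :
    (fun e : Fin N => (Pi.single (Fin.castSucc a) 1 : Fin (N+1) → ℝ) (Fin.castSucc e)) = (Pi.single a 1 : Fin N → ℝ) := by
  funext e
  simp [Pi.single_apply, Fin.castSucc_inj]

lemma pd_tang_comp_cast {N : ℕ} {G : (Fin N → ℝ) → ℝ} (hG : ContDiff ℝ (⊤ : ℕ∞) G)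
    (y : Fin (N+1) → ℝ) (a : Fin N) :
    pd (Fin.castSucc a) (fun z => G (fun e => z (Fin.castSucc e))) y
      = pd a G (fun e => y (Fin.castSucc e)) := by
  have hp : HasFDerivAt (fun z : Fin (N+1) → ℝ => (fun e => z (Fin.castSucc e))) (tproj N) y :=
    (tproj N).hasFDerivAt.congr_of_eventuallyEq (Filter.Eventually.of_forall fun z => rfl)
  have hG' : DifferentiableAt ℝ G (fun e => y (Fin.castSucc e)) :=
    (hG.differentiable (by simp)).differentiableAt
  have h2 : HasFDerivAt (fun z : Fin (N+1) → ℝ => G (fun e => z (Fin.castSucc e)))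
      ((fderiv ℝ G (fun e => y (Fin.castSucc e))).comp (tproj N)) y :=
    (hG'.hasFDerivAt).comp y hp
  rw [pd, h2.fderiv]
  have hs : tproj N (Pi.single (Fin.castSucc a) 1) = (Pi.single a 1 : Fin N → ℝ) :=
    single_comp_castSucc a
  simp only [ContinuousLinearMap.coe_comp', Function.comp_apply, hs]
  rfl

lemma pd_tang_comp_last {N : ℕ} {G : (Fin N → ℝ) → ℝ} (hG : ContDiff ℝ (⊤ : ℕ∞) G)
    (y : Fin (N+1) → ℝ) :
    pd (Fin.last N) (fun z => G (fun e => z (Fin.castSucc e))) y = 0 := by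
  have hp : HasFDerivAt (fun z : Fin (N+1) → ℝ => (fun e => z (Fin.castSucc e))) (tproj N) y :=
    (tproj N).hasFDerivAt.congr_of_eventuallyEq (Filter.Eventually.of_forall fun z => rfl)
  have hG' : DifferentiableAt ℝ G (fun e => y (Fin.castSucc e)) :=
    (hG.differentiable (by simp)).differentiableAt
  have h2 : HasFDerivAt (fun z : Fin (N+1) → ℝ => G (fun e => z (Fin.castSucc e)))
      ((fderiv ℝ G (fun e => y (Fin.castSucc e))).comp (tproj N)) y :=
    (hG'.hasFDerivAt).comp y hp
  rw [pd, h2.fderiv]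
  have hs : tproj N (Pi.single (Fin.last N) 1) = (0 : Fin N → ℝ) := single_comp_castSucc_last
  simp only [ContinuousLinearMap.coe_comp', Function.comp_apply, hs]
  simp


lemma pi_single_last {N : ℕ} : (Pi.single (Fin.last N) 1 : Fin (N+1) → ℝ) (Fin.last N) = 1 :=
  Pi.single_eq_same _ _

lemma pi_single_cast {N : ℕ} (a : Fin N) :
    (Pi.single (Fin.castSucc a) 1 : Fin (N+1) → ℝ) (Fin.last N) = 0 :=
  Pi.single_eq_of_ne (by simp [Fin.ext_iff]; omega) 1

lemma pd_prod_cast {N : ℕ} {A : ℝ → ℝ} {A' : ℝ} {G : (Fin N → ℝ) → ℝ} {y : Fin (N+1) → ℝ}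
    (hA : HasDerivAt A A' (y (Fin.last N))) (hG : ContDiff ℝ (⊤ : ℕ∞) G) (a : Fin N) :
    pd a.castSucc (fun z => A (z (Fin.last N)) * G (fun e => z (Fin.castSucc e))) y
      = A (y (Fin.last N)) * pd a G (fun e => y (Fin.castSucc e)) := by
  have hAz : DifferentiableAt ℝ (fun z : Fin (N+1) → ℝ => A (z (Fin.last N))) y := by
    have hp : HasFDerivAt (fun z : Fin (N+1) → ℝ => z (Fin.last N)) (lproj N) y :=
      (lproj N).hasFDerivAt.congr_of_eventuallyEq (Filter.Eventually.of_forall fun z => rfl)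
    exact (hA.comp_hasFDerivAt y hp).differentiableAt
  have hGz : DifferentiableAt ℝ (fun z : Fin (N+1) → ℝ => G (fun e => z (Fin.castSucc e))) y := by
    have hp : HasFDerivAt (fun z : Fin (N+1) → ℝ => (fun e => z (Fin.castSucc e))) (tproj N) y :=
      (tproj N).hasFDerivAt.congr_of_eventuallyEq (Filter.Eventually.of_forall fun z => rfl)
    exact (((hG.differentiable (by simp)).differentiableAt).hasFDerivAt.comp y hp).differentiableAt
  rw [pd_mul hAz hGz, pd_scalar_comp hA, pd_tang_comp_cast hG, pi_single_cast]
  ring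

lemma pd_prod_last {N : ℕ} {A : ℝ → ℝ} {A' : ℝ} {G : (Fin N → ℝ) → ℝ} {y : Fin (N+1) → ℝ}
    (hA : HasDerivAt A A' (y (Fin.last N))) (hG : ContDiff ℝ (⊤ : ℕ∞) G) :
    pd (Fin.last N) (fun z => A (z (Fin.last N)) * G (fun e => z (Fin.castSucc e))) y
      = A' * G (fun e => y (Fin.castSucc e)) := by
  have hAz : DifferentiableAt ℝ (fun z : Fin (N+1) → ℝ => A (z (Fin.last N))) y := by
    have hp : HasFDerivAt (fun z : Fin (N+1) → ℝ => z (Fin.last N)) (lproj N) y :=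
      (lproj N).hasFDerivAt.congr_of_eventuallyEq (Filter.Eventually.of_forall fun z => rfl)
    exact (hA.comp_hasFDerivAt y hp).differentiableAt
  have hGz : DifferentiableAt ℝ (fun z : Fin (N+1) → ℝ => G (fun e => z (Fin.castSucc e))) y := by
    have hp : HasFDerivAt (fun z : Fin (N+1) → ℝ => (fun e => z (Fin.castSucc e))) (tproj N) y :=
      (tproj N).hasFDerivAt.congr_of_eventuallyEq (Filter.Eventually.of_forall fun z => rfl)
    exact (((hG.differentiable (by simp)).differentiableAt).hasFDerivAt.comp y hp).differentiableAt
  rw [pd_mul hAz hGz, pd_scalar_comp hA, pd_tang_comp_last hG, pi_single_last]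
  ring

lemma pd_lastfun_mul_const {N : ℕ} {A : ℝ → ℝ} {A' : ℝ} {y : Fin (N+1) → ℝ}
    (hA : HasDerivAt A A' (y (Fin.last N))) (c : ℝ) (i : Fin (N+1)) :
    pd i (fun z => A (z (Fin.last N)) * c) y
      = A' * (Pi.single i 1 : Fin (N+1) → ℝ) (Fin.last N) * c := by
  have hAz : DifferentiableAt ℝ (fun z : Fin (N+1) → ℝ => A (z (Fin.last N))) y := by
    have hp : HasFDerivAt (fun z : Fin (N+1) → ℝ => z (Fin.last N)) (lproj N) y :=
      (lproj N).hasFDerivAt.congr_of_eventuallyEq (Filter.Eventually.of_forall fun z => rfl)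
    exact (hA.comp_hasFDerivAt y hp).differentiableAt
  rw [pd_mul_const hAz, pd_scalar_comp hA]

lemma hasDerivAt_sin2 (s : ℝ) :
    HasDerivAt (fun t : ℝ => Real.sin (2 * t)) (Real.cos (2 * s) * 2) s := by
  have h2 : HasDerivAt (fun t : ℝ => 2 * t) 2 s := by
    simpa using (hasDerivAt_id s).const_mul (2:ℝ)
  exact (Real.hasDerivAt_sin (2 * s)).comp s h2

lemma hasDerivAt_msin2 (s : ℝ) :
    HasDerivAt (fun t : ℝ => -(1/2) * Real.sin (2 * t)) (-(1/2) * (Real.cos (2 * s) * 2)) s :=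
  (hasDerivAt_sin2 s).const_mul (-(1/2))

lemma hasDerivAt_cot (s : ℝ) (hs : Real.sin s ≠ 0) :
    HasDerivAt (fun t : ℝ => Real.cos t / Real.sin t)
      ((-Real.sin s * Real.sin s - Real.cos s * Real.cos s) / Real.sin s ^ 2) s :=
  (Real.hasDerivAt_cos s).div (Real.hasDerivAt_sin s) hs

section SphereGammaLemmas
variable {d : ℕ} {gt : (Fin d → ℝ) → Fin d → Fin d → ℝ}
  {Γt : (Fin d → ℝ) → Fin d → Fin d → Fin d → ℝ} {y : Fin (d+1) → ℝ}

lemma sΓ_ttt (a b c : Fin d) :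
    sphereΓ d gt Γt y a.castSucc b.castSucc c.castSucc
      = Γt (fun e => y e.castSucc) a b c := by
  simp [sphereΓ, Fin.is_lt]

lemma sΓ_ttl (a b : Fin d) :
    sphereΓ d gt Γt y a.castSucc b.castSucc (Fin.last d)
      = Real.cos (y (Fin.last d)) / Real.sin (y (Fin.last d))
        * (if (a:ℕ) = (b:ℕ) then 1 else 0) := by
  simp [sphereΓ, Fin.is_lt]

lemma sΓ_tlt (a c : Fin d) :
    sphereΓ d gt Γt y a.castSucc (Fin.last d) c.castSucc
      = Real.cos (y (Fin.last d)) / Real.sin (y (Fin.last d))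
        * (if (a:ℕ) = (c:ℕ) then 1 else 0) := by
  simp [sphereΓ, Fin.is_lt]

lemma sΓ_tll (a : Fin d) :
    sphereΓ d gt Γt y a.castSucc (Fin.last d) (Fin.last d) = 0 := by
  simp [sphereΓ, Fin.is_lt]

lemma sΓ_ltt (b c : Fin d) :
    sphereΓ d gt Γt y (Fin.last d) b.castSucc c.castSucc
      = -(1/2) * Real.sin (2 * y (Fin.last d)) * gt (fun e => y e.castSucc) b c := by
  simp [sphereΓ, Fin.is_lt]

lemma sΓ_ltl (b : Fin d) :
    sphereΓ d gt Γt y (Fin.last d) b.castSucc (Fin.last d) = 0 := by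
  simp [sphereΓ, Fin.is_lt]

lemma sΓ_llx (γ : Fin (d+1)) :
    sphereΓ d gt Γt y (Fin.last d) (Fin.last d) γ = 0 := by
  simp [sphereΓ]

end SphereGammaLemmas

section PdSphereGamma
variable {d : ℕ} {gt : (Fin d → ℝ) → Fin d → Fin d → ℝ}
  {Γt : (Fin d → ℝ) → Fin d → Fin d → Fin d → ℝ} {y : Fin (d+1) → ℝ}

lemma pdsΓ_ltt_cast (hgt : ∀ a b, ContDiff ℝ (⊤ : ℕ∞) fun w => gt w a b)
    (a b c : Fin d) :
    pd a.castSucc (fun z => sphereΓ d gt Γt z (Fin.last d) b.castSucc c.castSucc) y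
      = -(1/2) * Real.sin (2 * y (Fin.last d))
          * pd a (fun w => gt w b c) (fun e => y e.castSucc) := by
  rw [pd_congr (fun z => sΓ_ltt (y := z) b c) _ _]
  exact pd_prod_cast (hasDerivAt_msin2 _) (hgt b c) a

lemma pdsΓ_ltt_last (hgt : ∀ a b, ContDiff ℝ (⊤ : ℕ∞) fun w => gt w a b)
    (b c : Fin d) :
    pd (Fin.last d) (fun z => sphereΓ d gt Γt z (Fin.last d) b.castSucc c.castSucc) y
      = -(1/2) * (Real.cos (2 * y (Fin.last d)) * 2) * gt (fun e => y e.castSucc) b c := by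
  rw [pd_congr (fun z => sΓ_ltt (y := z) b c) _ _]
  exact pd_prod_last (hasDerivAt_msin2 _) (hgt b c)

lemma pdsΓ_ltl (b : Fin d) (i : Fin (d+1)) :
    pd i (fun z => sphereΓ d gt Γt z (Fin.last d) b.castSucc (Fin.last d)) y = 0 := by
  rw [pd_congr (fun z => sΓ_ltl (y := z) b) _ _]; exact pd_const 0 i y

lemma pdsΓ_llx (γ : Fin (d+1)) (i : Fin (d+1)) :
    pd i (fun z => sphereΓ d gt Γt z (Fin.last d) (Fin.last d) γ) y = 0 := by
  rw [pd_congr (fun z => sΓ_llx (y := z) γ) _ _]; exact pd_const 0 i y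

lemma pdsΓ_tll (a : Fin d) (i : Fin (d+1)) :
    pd i (fun z => sphereΓ d gt Γt z a.castSucc (Fin.last d) (Fin.last d)) y = 0 := by
  rw [pd_congr (fun z => sΓ_tll (y := z) a) _ _]; exact pd_const 0 i y

lemma pdsΓ_ttt_cast (hΓt : ∀ a b c, ContDiff ℝ (⊤ : ℕ∞) fun w => Γt w a b c)
    (e a b c : Fin d) :
    pd e.castSucc (fun z => sphereΓ d gt Γt z a.castSucc b.castSucc c.castSucc) y
      = pd e (fun w => Γt w a b c) (fun e' => y e'.castSucc) := by
  rw [pd_congr (fun z => sΓ_ttt (y := z) a b c) _ _]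
  exact pd_tang_comp_cast (hΓt a b c) y e

lemma pdsΓ_ttt_last (hΓt : ∀ a b c, ContDiff ℝ (⊤ : ℕ∞) fun w => Γt w a b c)
    (a b c : Fin d) :
    pd (Fin.last d) (fun z => sphereΓ d gt Γt z a.castSucc b.castSucc c.castSucc) y = 0 := by
  rw [pd_congr (fun z => sΓ_ttt (y := z) a b c) _ _]
  exact pd_tang_comp_last (hΓt a b c) y

lemma pdsΓ_ttl (hs : Real.sin (y (Fin.last d)) ≠ 0) (a b : Fin d) (i : Fin (d+1)) :
    pd i (fun z => sphereΓ d gt Γt z a.castSucc b.castSucc (Fin.last d)) y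
      = (-Real.sin (y (Fin.last d)) * Real.sin (y (Fin.last d))
          - Real.cos (y (Fin.last d)) * Real.cos (y (Fin.last d))) / Real.sin (y (Fin.last d)) ^ 2
        * (Pi.single i 1 : Fin (d+1) → ℝ) (Fin.last d)
        * (if (a:ℕ) = (b:ℕ) then 1 else 0) := by
  rw [pd_congr (fun z => sΓ_ttl (y := z) a b) _ _]
  exact pd_lastfun_mul_const (hasDerivAt_cot _ hs) _ i

lemma pdsΓ_tlt (hs : Real.sin (y (Fin.last d)) ≠ 0) (a c : Fin d) (i : Fin (d+1)) :
    pd i (fun z => sphereΓ d gt Γt z a.castSucc (Fin.last d) c.castSucc) y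
      = (-Real.sin (y (Fin.last d)) * Real.sin (y (Fin.last d))
          - Real.cos (y (Fin.last d)) * Real.cos (y (Fin.last d))) / Real.sin (y (Fin.last d)) ^ 2
        * (Pi.single i 1 : Fin (d+1) → ℝ) (Fin.last d)
        * (if (a:ℕ) = (c:ℕ) then 1 else 0) := by
  rw [pd_congr (fun z => sΓ_tlt (y := z) a c) _ _]
  exact pd_lastfun_mul_const (hasDerivAt_cot _ hs) _ i

end PdSphereGamma

section Smoothness
variable {m d : ℕ} {P : ChartData m (d+1)}
  {gt : (Fin d → ℝ) → Fin d → Fin d → ℝ}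
  {Γt : (Fin d → ℝ) → Fin d → Fin d → Fin d → ℝ}
  {φ : (Fin m → ℝ) → Fin (d+1) → ℝ}

lemma cd_phi (hφ : ContDiff ℝ (⊤:ℕ∞) φ) (α : Fin (d+1)) :
    ContDiff ℝ (⊤:ℕ∞) fun x => φ x α :=
  (ContinuousLinearMap.proj α : (Fin (d+1) → ℝ) →L[ℝ] ℝ).contDiff.comp hφ

lemma cd_phit (hφ : ContDiff ℝ (⊤:ℕ∞) φ) :
    ContDiff ℝ (⊤:ℕ∞) fun x => (fun e : Fin d => φ x e.castSucc) :=
  contDiff_pi.mpr fun e => cd_phi hφ e.castSucc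

lemma sin_phi_pos (hchart : ∀ x, 0 < φ x (Fin.last d) ∧ φ x (Fin.last d) < Real.pi) (x) :
    0 < Real.sin (φ x (Fin.last d)) :=
  Real.sin_pos_of_pos_of_lt_pi (hchart x).1 (hchart x).2

lemma cd_cos_phi (hφ : ContDiff ℝ (⊤:ℕ∞) φ) :
    ContDiff ℝ (⊤:ℕ∞) fun x => Real.cos (φ x (Fin.last d)) :=
  (Real.contDiff_cos.of_le le_top).comp (cd_phi hφ (Fin.last d))

lemma cd_sin_phi (hφ : ContDiff ℝ (⊤:ℕ∞) φ) :
    ContDiff ℝ (⊤:ℕ∞) fun x => Real.sin (φ x (Fin.last d)) :=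
  (Real.contDiff_sin.of_le le_top).comp (cd_phi hφ (Fin.last d))

lemma cd_sin2_phi (hφ : ContDiff ℝ (⊤:ℕ∞) φ) :
    ContDiff ℝ (⊤:ℕ∞) fun x => Real.sin (2 * φ x (Fin.last d)) :=
  (Real.contDiff_sin.of_le le_top).comp (contDiff_const.mul (cd_phi hφ (Fin.last d)))

lemma cd_cos2_phi (hφ : ContDiff ℝ (⊤:ℕ∞) φ) :
    ContDiff ℝ (⊤:ℕ∞) fun x => Real.cos (2 * φ x (Fin.last d)) :=
  (Real.contDiff_cos.of_le le_top).comp (contDiff_const.mul (cd_phi hφ (Fin.last d)))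

lemma cd_ΓNφ (hΓN : P.ΓN = sphereΓ d gt Γt) (hφ : ContDiff ℝ (⊤:ℕ∞) φ)
    (hchart : ∀ x, 0 < φ x (Fin.last d) ∧ φ x (Fin.last d) < Real.pi)
    (hgt : ∀ a b, ContDiff ℝ (⊤ : ℕ∞) fun w => gt w a b)
    (hΓt : ∀ a b c, ContDiff ℝ (⊤ : ℕ∞) fun w => Γt w a b c)
    (α β γ : Fin (d+1)) :
    ContDiff ℝ (⊤:ℕ∞) fun x => P.ΓN (φ x) α β γ := by
  have hs : ∀ x, Real.sin (φ x (Fin.last d)) ≠ 0 := fun x => (sin_phi_pos hchart x).ne'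
  have hcot : ContDiff ℝ (⊤:ℕ∞) fun x =>
      Real.cos (φ x (Fin.last d)) / Real.sin (φ x (Fin.last d)) :=
    (cd_cos_phi hφ).div (cd_sin_phi hφ) hs
  rw [hΓN]
  induction α using Fin.lastCases with
  | last =>
    induction β using Fin.lastCases with
    | last => simp only [sΓ_llx]; exact contDiff_const
    | cast b =>
      induction γ using Fin.lastCases with
      | last => simp only [sΓ_ltl]; exact contDiff_const
      | cast c =>
        simp only [sΓ_ltt]
        exact (contDiff_const.mul (cd_sin2_phi hφ)).mul ((hgt b c).comp (cd_phit hφ))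
  | cast a =>
    induction β using Fin.lastCases with
    | last =>
      induction γ using Fin.lastCases with
      | last => simp only [sΓ_tll]; exact contDiff_const
      | cast c => simp only [sΓ_tlt]; exact hcot.mul contDiff_const
    | cast b =>
      induction γ using Fin.lastCases with
      | last => simp only [sΓ_ttl]; exact hcot.mul contDiff_const
      | cast c => simp only [sΓ_ttt]; exact (hΓt a b c).comp (cd_phit hφ)

lemma cd_pdΓNφ (hΓN : P.ΓN = sphereΓ d gt Γt) (hφ : ContDiff ℝ (⊤:ℕ∞) φ)
    (hchart : ∀ x, 0 < φ x (Fin.last d) ∧ φ x (Fin.last d) < Real.pi)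
    (hgt : ∀ a b, ContDiff ℝ (⊤ : ℕ∞) fun w => gt w a b)
    (hΓt : ∀ a b c, ContDiff ℝ (⊤ : ℕ∞) fun w => Γt w a b c)
    (i α β γ : Fin (d+1)) :
    ContDiff ℝ (⊤:ℕ∞) fun x => pd i (fun z => P.ΓN z α β γ) (φ x) := by
  have hs : ∀ x, Real.sin (φ x (Fin.last d)) ≠ 0 := fun x => (sin_phi_pos hchart x).ne'
  have hcotD : ContDiff ℝ (⊤:ℕ∞) fun x =>
      (-Real.sin (φ x (Fin.last d)) * Real.sin (φ x (Fin.last d))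
        - Real.cos (φ x (Fin.last d)) * Real.cos (φ x (Fin.last d)))
        / Real.sin (φ x (Fin.last d)) ^ 2 := by
    refine ContDiff.div ?_ ((cd_sin_phi hφ).pow 2) (fun x => pow_ne_zero 2 (hs x))
    exact ((cd_sin_phi hφ).neg.mul (cd_sin_phi hφ)).sub ((cd_cos_phi hφ).mul (cd_cos_phi hφ))
  rw [hΓN]
  induction α using Fin.lastCases with
  | last =>
    induction β using Fin.lastCases with
    | last =>
      have he : (fun x => pd i (fun z => sphereΓ d gt Γt z (Fin.last d) (Fin.last d) γ) (φ x))
          = fun _ => (0:ℝ) := funext fun x => pdsΓ_llx γ i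
      rw [he]; exact contDiff_const
    | cast b =>
      induction γ using Fin.lastCases with
      | last =>
        have he : (fun x => pd i
              (fun z => sphereΓ d gt Γt z (Fin.last d) b.castSucc (Fin.last d)) (φ x))
            = fun _ => (0:ℝ) := funext fun x => pdsΓ_ltl b i
        rw [he]; exact contDiff_const
      | cast c =>
        induction i using Fin.lastCases with
        | last =>
          have he := funext fun x => pdsΓ_ltt_last (y := φ x) (Γt := Γt) hgt b c
          rw [he]
          exact (contDiff_const.mul ((cd_cos2_phi hφ).mul contDiff_const)).mul
            ((hgt b c).comp (cd_phit hφ))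
        | cast e =>
          have he := funext fun x => pdsΓ_ltt_cast (y := φ x) (Γt := Γt) hgt e b c
          rw [he]
          exact (contDiff_const.mul (cd_sin2_phi hφ)).mul
            ((contDiff_pd (hgt b c) e).comp (cd_phit hφ))
  | cast a =>
    induction β using Fin.lastCases with
    | last =>
      induction γ using Fin.lastCases with
      | last =>
        have he : (fun x => pd i
              (fun z => sphereΓ d gt Γt z a.castSucc (Fin.last d) (Fin.last d)) (φ x))
            = fun _ => (0:ℝ) := funext fun x => pdsΓ_tll a i
        rw [he]; exact contDiff_const
      | cast c =>
        have he := funext fun x => pdsΓ_tlt (y := φ x) (gt := gt) (Γt := Γt) (hs x) a c i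
        rw [he]
        exact (hcotD.mul contDiff_const).mul contDiff_const
    | cast b =>
      induction γ using Fin.lastCases with
      | last =>
        have he := funext fun x => pdsΓ_ttl (y := φ x) (gt := gt) (Γt := Γt) (hs x) a b i
        rw [he]
        exact (hcotD.mul contDiff_const).mul contDiff_const
      | cast c =>
        induction i using Fin.lastCases with
        | last =>
          have he : (fun x => pd (Fin.last d)
                (fun z => sphereΓ d gt Γt z a.castSucc b.castSucc c.castSucc) (φ x))
              = fun _ => (0:ℝ) := funext fun x => pdsΓ_ttt_last hΓt a b c
          rw [he]; exact contDiff_const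
        | cast e =>
          have he := funext fun x => pdsΓ_ttt_cast (y := φ x) (gt := gt) hΓt e a b c
          rw [he]
          exact (contDiff_pd (hΓt a b c) e).comp (cd_phit hφ)

variable (hΓN : P.ΓN = sphereΓ d gt Γt) (hφ : ContDiff ℝ (⊤:ℕ∞) φ)
    (hchart : ∀ x, 0 < φ x (Fin.last d) ∧ φ x (Fin.last d) < Real.pi)
    (hgt : ∀ a b, ContDiff ℝ (⊤ : ℕ∞) fun w => gt w a b)
    (hΓt : ∀ a b c, ContDiff ℝ (⊤ : ℕ∞) fun w => Γt w a b c)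
    (hPdom : P.SmoothDomain)

include hΓN hφ hchart hgt hΓt in
lemma cd_Scoefφ (α β ω ϑ : Fin (d+1)) :
    ContDiff ℝ (⊤:ℕ∞) fun x => Scoef P (φ x) α β ω ϑ := by
  simp only [Scoef]
  refine ContDiff.div_const ?_ 2
  refine ((ContDiff.add ?_ ?_).add ?_).add ?_
  · exact cd_pdΓNφ hΓN hφ hchart hgt hΓt ω α β ϑ
  · exact ContDiff.sum fun γ _ => (cd_ΓNφ hΓN hφ hchart hgt hΓt γ β ϑ).mul
      (cd_ΓNφ hΓN hφ hchart hgt hΓt α ω γ)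
  · exact cd_pdΓNφ hΓN hφ hchart hgt hΓt β α ω ϑ
  · exact ContDiff.sum fun γ _ => (cd_ΓNφ hΓN hφ hchart hgt hΓt γ ω ϑ).mul
      (cd_ΓNφ hΓN hφ hchart hgt hΓt α β γ)

include hφ in
lemma cd_dphi (i : Fin m) (β : Fin (d+1)) :
    ContDiff ℝ (⊤:ℕ∞) fun x => dphi φ x i β := by
  exact contDiff_pd (cd_phi hφ β) i

lemma cd_lap {f : (Fin m → ℝ) → ℝ} (hPdom : P.SmoothDomain) (hf : ContDiff ℝ (⊤:ℕ∞) f) :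
    ContDiff ℝ (⊤:ℕ∞) (lap P f) := by
  unfold lap
  refine ContDiff.neg (ContDiff.sub ?_ ?_)
  · exact ContDiff.sum fun i _ => ContDiff.sum fun j _ =>
      (hPdom.1 i j).mul (contDiff_pd (contDiff_pd hf j) i)
  · exact ContDiff.sum fun i _ => ContDiff.sum fun j _ => ContDiff.sum fun k _ =>
      ((hPdom.1 i j).mul (hPdom.2 k i j)).mul (contDiff_pd hf k)

include hΓN hφ hchart hgt hΓt hPdom in
lemma cd_tension (α : Fin (d+1)) :
    ContDiff ℝ (⊤:ℕ∞) fun x => tension P φ x α := by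
  simp only [tension]
  refine ContDiff.add (ContDiff.neg (cd_lap hPdom (cd_phi hφ α))) ?_
  exact ContDiff.sum fun i _ => ContDiff.sum fun j _ => ContDiff.sum fun ϑ _ =>
    ContDiff.sum fun β _ =>
      (((hPdom.1 i j).mul (cd_ΓNφ hΓN hφ hchart hgt hΓt α ϑ β)).mul
        (cd_dphi hφ i ϑ)).mul (cd_dphi hφ j β)

include hΓN hφ hchart hgt hΓt hPdom in
lemma cd_Asec {σ : (Fin m → ℝ) → Fin (d+1) → ℝ}
    (hσ : ∀ α, ContDiff ℝ (⊤:ℕ∞) fun x => σ x α) (α : Fin (d+1)) :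
    ContDiff ℝ (⊤:ℕ∞) fun x => Asec P φ σ x α := by
  simp only [Asec, Aop]
  refine ContDiff.add ?_ ?_
  · refine ContDiff.sum fun ϑ _ => ContDiff.sum fun i _ => ContDiff.mul ?_ ?_
    · exact contDiff_pd (hσ ϑ) i
    · refine contDiff_const.mul ?_
      exact ContDiff.sum fun j _ => ContDiff.sum fun β _ =>
        ((hPdom.1 i j).mul (cd_dphi hφ j β)).mul (cd_ΓNφ hΓN hφ hchart hgt hΓt α β ϑ)
  · refine ContDiff.sum fun ϑ _ => ContDiff.mul (hσ ϑ) (ContDiff.sub ?_ ?_)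
    · exact ContDiff.sum fun β _ =>
        (cd_lap hPdom (cd_phi hφ β)).mul (cd_ΓNφ hΓN hφ hchart hgt hΓt α β ϑ)
    · exact ContDiff.sum fun i _ => ContDiff.sum fun j _ => ContDiff.sum fun β _ =>
        ContDiff.sum fun ω _ =>
          (((hPdom.1 i j).mul (cd_dphi hφ j β)).mul (cd_dphi hφ i ω)).mul
            (cd_Scoefφ hΓN hφ hchart hgt hΓt α β ω ϑ)

include hΓN hφ hchart hgt hΓt hPdom in
lemma cd_uvar (j : ℕ) (α : Fin (d+1)) :
    ContDiff ℝ (⊤:ℕ∞) fun x => uvar P φ j x α := by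
  induction j generalizing α with
  | zero => exact cd_tension hΓN hφ hchart hgt hΓt hPdom α
  | succ j ih =>
    simp only [uvar]
    exact (cd_lap hPdom (ih α)).add (cd_Asec hΓN hφ hchart hgt hΓt hPdom ih α)

include hΓN hφ hchart hgt hΓt hPdom in
lemma cd_vvar (j : ℕ) (i : Fin m) (α : Fin (d+1)) :
    ContDiff ℝ (⊤:ℕ∞) fun x => vvar P φ j x i α := by
  simp only [vvar]
  exact contDiff_pd (cd_uvar hΓN hφ hchart hgt hΓt hPdom j α) i

include hΓN hφ hchart hgt hΓt in
lemma cd_Rcφ (α δ β γ : Fin (d+1)) :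
    ContDiff ℝ (⊤:ℕ∞) fun x => Rc P (φ x) α δ β γ := by
  simp only [Rc]
  refine ContDiff.add (ContDiff.sub ?_ ?_) ?_
  · exact cd_pdΓNφ hΓN hφ hchart hgt hΓt β α γ δ
  · exact cd_pdΓNφ hΓN hφ hchart hgt hΓt γ α β δ
  · exact ContDiff.sum fun μ _ => ContDiff.sub
      ((cd_ΓNφ hΓN hφ hchart hgt hΓt α β μ).mul (cd_ΓNφ hΓN hφ hchart hgt hΓt μ γ δ))
      ((cd_ΓNφ hΓN hφ hchart hgt hΓt α γ μ).mul (cd_ΓNφ hΓN hφ hchart hgt hΓt μ β δ))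

include hΓN hφ hchart hgt hΓt in
lemma cd_Ecoefφ (α β δ ϑ η : Fin (d+1)) :
    ContDiff ℝ (⊤:ℕ∞) fun x => Ecoef P (φ x) α β δ ϑ η := by
  simp only [Ecoef]
  exact ContDiff.sum fun γ _ => ContDiff.add
    ((cd_Rcφ hΓN hφ hchart hgt hΓt α β γ δ).mul (cd_ΓNφ hΓN hφ hchart hgt hΓt γ ϑ η))
    ((cd_Rcφ hΓN hφ hchart hgt hΓt α β γ ϑ).mul (cd_ΓNφ hΓN hφ hchart hgt hΓt γ δ η))

include hφ hPdom in
lemma cd_dpairφ (γ β : Fin (d+1)) :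
    ContDiff ℝ (⊤:ℕ∞) fun x => dpair P φ φ x γ β := by
  simp only [dpair]
  exact ContDiff.sum fun i _ => ContDiff.sum fun j _ =>
    ((hPdom.1 i j).mul (cd_dphi hφ i γ)).mul (cd_dphi hφ j β)

include hΓN hφ hchart hgt hΓt hPdom in
lemma cd_vpairφ (l : ℕ) (γ β : Fin (d+1)) :
    ContDiff ℝ (⊤:ℕ∞) fun x => vpair P φ (vvar P φ l x) x γ β := by
  simp only [vpair]
  exact ContDiff.sum fun i _ => ContDiff.sum fun j _ =>
    ((hPdom.1 i j).mul (cd_vvar hΓN hφ hchart hgt hΓt hPdom l i γ)).mul (cd_dphi hφ j β)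

end Smoothness

section GoodFramework
variable {m : ℕ} {D : Set (Fin m → ℝ)} {B : (Fin m → ℝ) → ℝ}

def Bdd (D : Set (Fin m → ℝ)) (h : (Fin m → ℝ) → ℝ) : Prop :=
  ∃ C, 0 ≤ C ∧ ∀ x ∈ D, |h x| ≤ C

lemma bdd_of_contDiff (hDcpt : IsCompact (closure D)) {h : (Fin m → ℝ) → ℝ}
    (hh : ContDiff ℝ (⊤:ℕ∞) h) : Bdd D h := by
  obtain ⟨C, hC⟩ := hDcpt.exists_bound_of_continuousOn hh.continuous.continuousOn
  refine ⟨max C 0, le_max_right _ _, fun x hx => ?_⟩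
  have := hC x (subset_closure hx)
  rw [Real.norm_eq_abs] at this
  exact this.trans (le_max_left _ _)

lemma bdd_const (c : ℝ) : Bdd D (fun _ => c) :=
  ⟨|c|, abs_nonneg c, fun _ _ => le_rfl⟩

lemma Bdd.mul {h g : (Fin m → ℝ) → ℝ} (hh : Bdd D h) (hg : Bdd D g) :
    Bdd D (fun x => h x * g x) := by
  obtain ⟨C1, hC1, h1⟩ := hh; obtain ⟨C2, hC2, h2⟩ := hg
  refine ⟨C1 * C2, mul_nonneg hC1 hC2, fun x hx => ?_⟩
  rw [abs_mul]
  exact mul_le_mul (h1 x hx) (h2 x hx) (abs_nonneg _) hC1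

/-- `GoodW D B F` : `|F| ≤ C·B` on `D`. -/
def GoodW (D : Set (Fin m → ℝ)) (B F : (Fin m → ℝ) → ℝ) : Prop :=
  ∃ C, 0 ≤ C ∧ ∀ x ∈ D, |F x| ≤ C * B x

lemma gw_zero' {F : (Fin m → ℝ) → ℝ} (h : ∀ x ∈ D, F x = 0) : GoodW D B F :=
  ⟨0, le_rfl, fun x hx => by simp [h x hx]⟩

lemma GoodW.add {F G : (Fin m → ℝ) → ℝ} (hF : GoodW D B F) (hG : GoodW D B G) :
    GoodW D B (fun x => F x + G x) := by
  obtain ⟨C1, hC1, h1⟩ := hF; obtain ⟨C2, hC2, h2⟩ := hG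
  refine ⟨C1 + C2, by positivity, fun x hx => ?_⟩
  calc |F x + G x| ≤ |F x| + |G x| := abs_add_le _ _
    _ ≤ C1 * B x + C2 * B x := add_le_add (h1 x hx) (h2 x hx)
    _ = (C1 + C2) * B x := by ring

lemma GoodW.neg {F : (Fin m → ℝ) → ℝ} (hF : GoodW D B F) : GoodW D B (fun x => -F x) := by
  obtain ⟨C, hC, h⟩ := hF
  exact ⟨C, hC, fun x hx => by rw [abs_neg]; exact h x hx⟩

lemma GoodW.sub {F G : (Fin m → ℝ) → ℝ} (hF : GoodW D B F) (hG : GoodW D B G) :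
    GoodW D B (fun x => F x - G x) := by
  simpa [sub_eq_add_neg] using hF.add hG.neg

lemma gw_sum {ι : Type*} (s : Finset ι)
    {F : ι → (Fin m → ℝ) → ℝ} (h : ∀ j ∈ s, GoodW D B (F j)) :
    GoodW D B (fun x => ∑ j ∈ s, F j x) := by
  classical
  induction s using Finset.induction with
  | empty => exact gw_zero' (fun x _ => by simp)
  | @insert a s' hnotmem ih =>
    have h1 := h a (Finset.mem_insert_self a s')
    have h2 := ih (fun j hj => h j (Finset.mem_insert_of_mem hj))
    have := h1.add h2
    obtain ⟨C, hC, hle⟩ := this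
    refine ⟨C, hC, fun x hx => ?_⟩
    simp only [Finset.sum_insert hnotmem]
    exact hle x hx

lemma gw_bdd_mul {h F : (Fin m → ℝ) → ℝ} (hh : Bdd D h) (hF : GoodW D B F) :
    GoodW D B (fun x => h x * F x) := by
  obtain ⟨C1, hC1, h1⟩ := hh; obtain ⟨C2, hC2, h2⟩ := hF
  refine ⟨C1 * C2, mul_nonneg hC1 hC2, fun x hx => ?_⟩
  rw [abs_mul, mul_assoc]
  exact mul_le_mul (h1 x hx) (h2 x hx) (abs_nonneg _) hC1

lemma gw_mul_bdd {h F : (Fin m → ℝ) → ℝ} (hF : GoodW D B F) (hh : Bdd D h) :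
    GoodW D B (fun x => F x * h x) := by
  obtain ⟨C, hC, hle⟩ := gw_bdd_mul hh hF
  exact ⟨C, hC, fun x hx => by simpa [mul_comm] using hle x hx⟩

lemma gw_of_le {F G : (Fin m → ℝ) → ℝ} (h : ∀ x ∈ D, |F x| ≤ |G x|) (hG : GoodW D B G) :
    GoodW D B F := by
  obtain ⟨C, hC, hle⟩ := hG
  exact ⟨C, hC, fun x hx => (h x hx).trans (hle x hx)⟩

lemma GoodW.div2 {F : (Fin m → ℝ) → ℝ} (hF : GoodW D B F) :
    GoodW D B (fun x => F x / 2) := by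
  refine gw_of_le (fun x hx => ?_) hF
  rw [abs_div]
  exact div_le_self (abs_nonneg _) (by norm_num)

lemma gw_base (hB : ∀ x ∈ D, 0 ≤ B x) {F : (Fin m → ℝ) → ℝ}
    (h : ∀ x ∈ D, |F x| ≤ B x) : GoodW D B F :=
  ⟨1, zero_le_one, fun x hx => by rw [one_mul]; exact h x hx⟩

end GoodFramework

section RcZero
variable {m d : ℕ} {P : ChartData m (d+1)}
  {gt : (Fin d → ℝ) → Fin d → Fin d → ℝ}
  {Γt : (Fin d → ℝ) → Fin d → Fin d → Fin d → ℝ}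

lemma Rc_tang_zero (hΓN : P.ΓN = sphereΓ d gt Γt)
    (hgt : ∀ a b, ContDiff ℝ (⊤ : ℕ∞) fun w => gt w a b)
    (hLC : LeviCivita d gt Γt)
    (y : Fin (d+1) → ℝ) (a b c : Fin d) :
    Rc P y (Fin.last d) a.castSucc b.castSucc c.castSucc = 0 := by
  obtain ⟨hgsym, hpos, hΓsym, hLC4⟩ := hLC
  simp only [Rc, hΓN]
  rw [Fin.sum_univ_castSucc]
  simp only [sΓ_ltt, sΓ_ttt, sΓ_ltl]
  rw [pd_prod_cast (hasDerivAt_msin2 _) (hgt c a) b, pd_prod_cast (hasDerivAt_msin2 _) (hgt b a) c]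
  have h1 : pd b (fun w => gt w c a) (fun e => y e.castSucc)
      = (∑ e, gt (fun e' => y e'.castSucc) e a * Γt (fun e' => y e'.castSucc) e b c)
        + ∑ e, gt (fun e' => y e'.castSucc) c e * Γt (fun e' => y e'.castSucc) e b a :=
    hLC4 (fun e => y e.castSucc) c a b
  have h2 : pd c (fun w => gt w b a) (fun e => y e.castSucc)
      = (∑ e, gt (fun e' => y e'.castSucc) e a * Γt (fun e' => y e'.castSucc) e b c)
        + ∑ e, gt (fun e' => y e'.castSucc) b e * Γt (fun e' => y e'.castSucc) e c a := by
    rw [hLC4 (fun e => y e.castSucc) b a c]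
    congr 1
    exact Finset.sum_congr rfl fun e _ => by rw [hΓsym (fun e' => y e'.castSucc) e c b]
  rw [h1, h2]
  have e1 : (∑ e : Fin d,
        (-(1/2) * Real.sin (2 * y (Fin.last d)) * gt (fun e' => y e'.castSucc) b e
            * Γt (fun e' => y e'.castSucc) e c a
          - -(1/2) * Real.sin (2 * y (Fin.last d)) * gt (fun e' => y e'.castSucc) c e
            * Γt (fun e' => y e'.castSucc) e b a))
      = -(1/2) * Real.sin (2 * y (Fin.last d))
          * ((∑ e, gt (fun e' => y e'.castSucc) b e * Γt (fun e' => y e'.castSucc) e c a)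
            - ∑ e, gt (fun e' => y e'.castSucc) c e * Γt (fun e' => y e'.castSucc) e b a) := by
    rw [mul_sub, Finset.mul_sum, Finset.mul_sum, ← Finset.sum_sub_distrib]
    exact Finset.sum_congr rfl fun e _ => by ring
  rw [e1]
  ring

end RcZero


lemma vnorm_nonneg {ι : Type} [Fintype ι] (f : ι → ℝ) : 0 ≤ vnorm f :=
  Real.sqrt_nonneg _

lemma abs_le_vnorm {ι : Type} [Fintype ι] (f : ι → ℝ) (i : ι) : |f i| ≤ vnorm f := by
  rw [← Real.sqrt_sq_eq_abs]
  exact Real.sqrt_le_sqrt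
    (Finset.single_le_sum (fun j _ => sq_nonneg (f j)) (Finset.mem_univ i))
end AuxPolyharm

/-- (Lemma 2.11 of the paper.)
Let `φ : M → S^n` (`n = d+1`) be a polyharmonic map of even order `k = 2s ≥ 4` in
the equator coordinates, with `f = φ^n - π/2`, and let `(F^k)^n` be the `n`-th
component of the local right-hand side of `Δu_{k-2} = F^k`. Then on any open set
`D` with compact closure contained in the chart domain `U` there exists `C > 0` with
`|(F^k)^n| ≤ C( |f| + |df| + Σ_{ℓ=0}^{k-2}|u^n_ℓ| + Σ_{ℓ=0}^{k-3}|v^n_ℓ| + |∇u^n_{k-2}| )`. -/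
theorem sphere_estimate_Fk
    {m d : ℕ} (P : ChartData m (d+1))
    (gt : (Fin d → ℝ) → Fin d → Fin d → ℝ)
    (Γt : (Fin d → ℝ) → Fin d → Fin d → Fin d → ℝ)
    (hΓN : P.ΓN = sphereΓ d gt Γt)
    (hPdom : P.SmoothDomain) (hPriem : P.Riemannian)
    (hgt : ∀ a b, ContDiff ℝ (⊤ : ℕ∞) fun y => gt y a b)
    (hΓt : ∀ a b c, ContDiff ℝ (⊤ : ℕ∞) fun y => Γt y a b c)
    (hLC : LeviCivita d gt Γt)
    (U : Set (Fin m → ℝ)) (hUopen : IsOpen U)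
    (φ : (Fin m → ℝ) → Fin (d+1) → ℝ) (hφ : ContDiff ℝ (⊤ : ℕ∞) φ)
    (hchart : ∀ x, 0 < φ x (Fin.last d) ∧ φ x (Fin.last d) < Real.pi)
    (k : ℕ) (hk : 4 ≤ k) (hkeven : Even k)
    (hpoly : ∀ (x : Fin m → ℝ) (α : Fin (d+1)), tauK P φ k x α = 0)
    (D : Set (Fin m → ℝ)) (hDopen : IsOpen D) (hDcpt : IsCompact (closure D))
    (hDsub : closure D ⊆ U) :
    ∃ C > 0, ∀ x ∈ D,
      |FkEvenSph P φ k x (Fin.last d)|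
        ≤ C * (|φ x (Fin.last d) - Real.pi / 2|
          + vnorm (fun i : Fin m => pd i (fun w => φ w (Fin.last d) - Real.pi / 2) x)
          + (∑ l ∈ Finset.range (k-1), |uvar P φ l x (Fin.last d)|)
          + (∑ l ∈ Finset.range (k-2),
              vnorm (fun i : Fin m => vvar P φ l x i (Fin.last d)))
          + vnorm (fun i : Fin m => vvar P φ (k-2) x i (Fin.last d))) := by
  classical
  set Bw : (Fin m → ℝ) → ℝ := fun x =>
    |φ x (Fin.last d) - Real.pi / 2|
      + vnorm (fun i : Fin m => pd i (fun w => φ w (Fin.last d) - Real.pi / 2) x)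
      + (∑ l ∈ Finset.range (k-1), |uvar P φ l x (Fin.last d)|)
      + (∑ l ∈ Finset.range (k-2),
          vnorm (fun i : Fin m => vvar P φ l x i (Fin.last d)))
      + vnorm (fun i : Fin m => vvar P φ (k-2) x i (Fin.last d)) with hBw
  -- nonnegativity of the pieces
  have hp1 : ∀ x, (0:ℝ) ≤ |φ x (Fin.last d) - Real.pi / 2| := fun x => abs_nonneg _
  have hp2 : ∀ x, (0:ℝ) ≤ vnorm (fun i : Fin m =>
      pd i (fun w => φ w (Fin.last d) - Real.pi / 2) x) := fun x => vnorm_nonneg _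
  have hp3 : ∀ x, (0:ℝ) ≤ ∑ l ∈ Finset.range (k-1), |uvar P φ l x (Fin.last d)| :=
    fun x => Finset.sum_nonneg fun l _ => abs_nonneg _
  have hp4 : ∀ x, (0:ℝ) ≤ ∑ l ∈ Finset.range (k-2),
      vnorm (fun i : Fin m => vvar P φ l x i (Fin.last d)) :=
    fun x => Finset.sum_nonneg fun l _ => vnorm_nonneg _
  have hp5 : ∀ x, (0:ℝ) ≤ vnorm (fun i : Fin m => vvar P φ (k-2) x i (Fin.last d)) :=
    fun x => vnorm_nonneg _
  have hBnn : ∀ x ∈ D, 0 ≤ Bw x := fun x _ => by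
    rw [hBw]; have := hp1 x; have := hp2 x; have := hp3 x; have := hp4 x; have := hp5 x
    dsimp only; linarith
  -- the main claim
  suffices hgood : GoodW D Bw (fun x => FkEvenSph P φ k x (Fin.last d)) by
    obtain ⟨C, hC, hle⟩ := hgood
    refine ⟨C + 1, by linarith, fun x hx => ?_⟩
    have h2 := hle x hx
    have hb : 0 ≤ Bw x := hBnn x hx
    have h3 : C * Bw x ≤ (C+1) * Bw x := by nlinarith
    have h4 := h2.trans h3
    rw [hBw] at h4
    exact h4
  -- smoothness shorthands
  have cdΓφ := cd_ΓNφ hΓN hφ hchart hgt hΓt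
  have cdu := cd_uvar hΓN hφ hchart hgt hΓt hPdom
  have cdvv := cd_vvar hΓN hφ hchart hgt hΓt hPdom
  have cdR := cd_Rcφ hΓN hφ hchart hgt hΓt
  have cdS := cd_Scoefφ hΓN hφ hchart hgt hΓt
  have cdE := cd_Ecoefφ hΓN hφ hchart hgt hΓt
  have cddp := cd_dpairφ (P := P) hφ hPdom
  have cdvp := cd_vpairφ hΓN hφ hchart hgt hΓt hPdom
  have cdlapφ : ∀ β, ContDiff ℝ (⊤:ℕ∞) (lap P (fun z => φ z β)) :=
    fun β => cd_lap hPdom (cd_phi hφ β)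
  have cdgtφ : ∀ b c : Fin d, ContDiff ℝ (⊤:ℕ∞)
      (fun x => gt (fun e => φ x e.castSucc) b c) :=
    fun b c => (hgt b c).comp (cd_phit hφ)
  have cdpdgtφ : ∀ (w b c : Fin d), ContDiff ℝ (⊤:ℕ∞)
      (fun x => pd w (fun u => gt u b c) (fun e => φ x e.castSucc)) :=
    fun w b c => (contDiff_pd (hgt b c) w).comp (cd_phit hφ)
  have bddc : ∀ {h : (Fin m → ℝ) → ℝ}, ContDiff ℝ (⊤:ℕ∞) h → Bdd D h :=
    fun hh => bdd_of_contDiff hDcpt hh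
  -- atoms
  have hgf : GoodW D Bw (fun x => φ x (Fin.last d) - Real.pi / 2) := by
    refine gw_base hBnn fun x hx => ?_
    rw [hBw]; dsimp only
    have := hp2 x; have := hp3 x; have := hp4 x; have := hp5 x; linarith
  have hgdf : ∀ i : Fin m,
      GoodW D Bw (fun x => pd i (fun w => φ w (Fin.last d) - Real.pi / 2) x) := by
    intro i
    refine gw_base hBnn fun x hx => ?_
    rw [hBw]; dsimp only
    have h1 := abs_le_vnorm (fun i : Fin m =>
      pd i (fun w => φ w (Fin.last d) - Real.pi / 2) x) i
    have := hp1 x; have := hp3 x; have := hp4 x; have := hp5 x; linarith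
  have hgu : ∀ l, l ≤ k - 2 → GoodW D Bw (fun x => uvar P φ l x (Fin.last d)) := by
    intro l hl
    refine gw_base hBnn fun x hx => ?_
    rw [hBw]; dsimp only
    have h1 : |uvar P φ l x (Fin.last d)|
        ≤ ∑ l' ∈ Finset.range (k-1), |uvar P φ l' x (Fin.last d)| :=
      Finset.single_le_sum (f := fun l' => |uvar P φ l' x (Fin.last d)|)
        (fun _ _ => abs_nonneg _) (Finset.mem_range.mpr (show l < k-1 by omega))
    have := hp1 x; have := hp2 x; have := hp4 x; have := hp5 x; linarith
  have hgv : ∀ l, l ≤ k - 3 → ∀ i : Fin m,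
      GoodW D Bw (fun x => vvar P φ l x i (Fin.last d)) := by
    intro l hl i
    refine gw_base hBnn fun x hx => ?_
    rw [hBw]; dsimp only
    have h1 : |vvar P φ l x i (Fin.last d)|
        ≤ vnorm (fun i : Fin m => vvar P φ l x i (Fin.last d)) :=
      abs_le_vnorm (fun i : Fin m => vvar P φ l x i (Fin.last d)) i
    have h2 : vnorm (fun i : Fin m => vvar P φ l x i (Fin.last d))
        ≤ ∑ l' ∈ Finset.range (k-2),
            vnorm (fun i : Fin m => vvar P φ l' x i (Fin.last d)) :=
      Finset.single_le_sum
        (f := fun l' => vnorm (fun i : Fin m => vvar P φ l' x i (Fin.last d)))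
        (fun _ _ => vnorm_nonneg _) (Finset.mem_range.mpr (show l < k-2 by omega))
    have := hp1 x; have := hp2 x; have := hp3 x; have := hp5 x; linarith
  have hgvk : ∀ i : Fin m,
      GoodW D Bw (fun x => pd i (fun z => uvar P φ (k-2) z (Fin.last d)) x) := by
    intro i
    refine gw_base hBnn fun x hx => ?_
    rw [hBw]; dsimp only
    have h1 : |vvar P φ (k-2) x i (Fin.last d)|
        ≤ vnorm (fun i : Fin m => vvar P φ (k-2) x i (Fin.last d)) :=
      abs_le_vnorm (fun i : Fin m => vvar P φ (k-2) x i (Fin.last d)) i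
    rw [vvar] at h1
    have := hp1 x; have := hp2 x; have := hp3 x; have := hp4 x; linarith
  have hgsin2 : GoodW D Bw (fun x => Real.sin (2 * φ x (Fin.last d))) := by
    refine ⟨2, by norm_num, fun x hx => ?_⟩
    have hfB : |φ x (Fin.last d) - Real.pi / 2| ≤ Bw x := by
      rw [hBw]; dsimp only
      have := hp2 x; have := hp3 x; have := hp4 x; have := hp5 x; linarith
    have harg : 2 * φ x (Fin.last d)
        = 2 * (φ x (Fin.last d) - Real.pi / 2) + Real.pi := by ring
    calc |Real.sin (2 * φ x (Fin.last d))|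
        = |Real.sin (2 * (φ x (Fin.last d) - Real.pi / 2))| := by
          rw [harg, Real.sin_add_pi, abs_neg]
      _ ≤ |2 * (φ x (Fin.last d) - Real.pi / 2)| := Real.abs_sin_le_abs
      _ = 2 * |φ x (Fin.last d) - Real.pi / 2| := by
          rw [abs_mul]; norm_num
      _ ≤ 2 * Bw x := by linarith
  -- derived good quantities
  have hgΓtt : ∀ b c : Fin d,
      GoodW D Bw (fun x => P.ΓN (φ x) (Fin.last d) b.castSucc c.castSucc) := by
    intro b c
    have heq : (fun x => P.ΓN (φ x) (Fin.last d) b.castSucc c.castSucc)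
        = fun x => -(1/2) * Real.sin (2 * φ x (Fin.last d))
            * gt (fun e => φ x e.castSucc) b c :=
      funext fun x => by rw [hΓN]; exact sΓ_ltt b c
    rw [heq]
    exact gw_mul_bdd (gw_bdd_mul (bdd_const _) hgsin2) (bddc (cdgtφ b c))
  have hgpdΓtt : ∀ w p b : Fin d, GoodW D Bw (fun x =>
      pd w.castSucc (fun z => P.ΓN z (Fin.last d) p.castSucc b.castSucc) (φ x)) := by
    intro w p b
    have heq : (fun x =>
          pd w.castSucc (fun z => P.ΓN z (Fin.last d) p.castSucc b.castSucc) (φ x))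
        = fun x => -(1/2) * Real.sin (2 * φ x (Fin.last d))
            * pd w (fun u => gt u p b) (fun e => φ x e.castSucc) :=
      funext fun x => by rw [hΓN]; exact pdsΓ_ltt_cast hgt w p b
    rw [heq]
    exact gw_mul_bdd (gw_bdd_mul (bdd_const _) hgsin2) (bddc (cdpdgtφ w p b))
  have hgS : ∀ p w b : Fin d, GoodW D Bw (fun x =>
      Scoef P (φ x) (Fin.last d) p.castSucc w.castSucc b.castSucc) := by
    intro p w b
    simp only [Scoef]
    refine GoodW.div2 (GoodW.add (GoodW.add (GoodW.add ?_ ?_) ?_) ?_)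
    · exact hgpdΓtt w p b
    · refine gw_sum _ fun γ _ => ?_
      induction γ using Fin.lastCases with
      | last => exact gw_zero' fun x _ => by simp [hΓN, sΓ_ltl]
      | cast g =>
        exact gw_bdd_mul (bddc (cdΓφ g.castSucc p.castSucc b.castSucc)) (hgΓtt w g)
    · exact hgpdΓtt p w b
    · refine gw_sum _ fun γ _ => ?_
      induction γ using Fin.lastCases with
      | last => exact gw_zero' fun x _ => by simp [hΓN, sΓ_ltl]
      | cast g =>
        exact gw_bdd_mul (bddc (cdΓφ g.castSucc w.castSucc b.castSucc)) (hgΓtt p g)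
  have hgdphiL : ∀ j : Fin m, GoodW D Bw (fun x => dphi φ x j (Fin.last d)) := by
    intro j
    have heq : (fun x => dphi φ x j (Fin.last d))
        = fun x => pd j (fun w => φ w (Fin.last d) - Real.pi / 2) x :=
      funext fun x => by simp only [dphi]; rw [pd_sub_const]
    rw [heq]
    exact hgdf j
  have hgdpairL : ∀ β, GoodW D Bw (fun x => dpair P φ φ x (Fin.last d) β) := by
    intro β
    simp only [dpair]
    refine gw_sum _ fun i _ => gw_sum _ fun j _ => ?_
    exact gw_mul_bdd (gw_bdd_mul (bddc (hPdom.1 i j)) (hgdphiL i))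
      (bddc (cd_dphi hφ j β))
  have hgdpairR : ∀ γ, GoodW D Bw (fun x => dpair P φ φ x γ (Fin.last d)) := by
    intro γ
    simp only [dpair]
    refine gw_sum _ fun i _ => gw_sum _ fun j _ => ?_
    exact gw_bdd_mul ((bddc (hPdom.1 i j)).mul (bddc (cd_dphi hφ i γ))) (hgdphiL j)
  have hgvpairL : ∀ l, l ≤ k - 3 → ∀ β,
      GoodW D Bw (fun x => vpair P φ (vvar P φ l x) x (Fin.last d) β) := by
    intro l hl β
    simp only [vpair]
    refine gw_sum _ fun i _ => gw_sum _ fun j _ => ?_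
    exact gw_mul_bdd (gw_bdd_mul (bddc (hPdom.1 i j)) (hgv l hl i))
      (bddc (cd_dphi hφ j β))
  have hgvpairR : ∀ l γ,
      GoodW D Bw (fun x => vpair P φ (vvar P φ l x) x γ (Fin.last d)) := by
    intro l γ
    simp only [vpair]
    refine gw_sum _ fun i _ => gw_sum _ fun j _ => ?_
    exact gw_bdd_mul ((bddc (hPdom.1 i j)).mul (bddc (cdvv l i γ))) (hgdphiL j)
  have hgE : ∀ β δ ϑ η : Fin d, GoodW D Bw (fun x =>
      Ecoef P (φ x) (Fin.last d) β.castSucc δ.castSucc ϑ.castSucc η.castSucc) := by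
    intro β δ ϑ η
    simp only [Ecoef]
    refine gw_sum _ fun γ _ => ?_
    induction γ using Fin.lastCases with
    | last =>
      refine GoodW.add ?_ ?_
      · exact gw_bdd_mul (bddc (cdR (Fin.last d) β.castSucc (Fin.last d) δ.castSucc))
          (hgΓtt ϑ η)
      · exact gw_bdd_mul (bddc (cdR (Fin.last d) β.castSucc (Fin.last d) ϑ.castSucc))
          (hgΓtt δ η)
    | cast g =>
      refine gw_zero' fun x _ => ?_
      rw [Rc_tang_zero hΓN hgt hLC (φ x) β g δ, Rc_tang_zero hΓN hgt hLC (φ x) β g ϑ]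
      ring
  -- main decomposition
  simp only [FkEvenSph, Asec, Aop]
  refine GoodW.sub (GoodW.sub (GoodW.neg (GoodW.add ?_ ?_)) ?_) ?_
  -- Part 1 of A
  · refine gw_sum _ fun ϑ _ => gw_sum _ fun i _ => ?_
    induction ϑ using Fin.lastCases with
    | last =>
      refine gw_mul_bdd (hgvk i) (bddc ?_)
      refine contDiff_const.mul ?_
      exact ContDiff.sum fun j _ => ContDiff.sum fun β _ =>
        ((hPdom.1 i j).mul (cd_dphi hφ j β)).mul (cdΓφ (Fin.last d) β (Fin.last d))
    | cast b =>
      refine gw_bdd_mul (bddc (contDiff_pd (cdu (k-2) b.castSucc) i)) ?_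
      refine gw_bdd_mul (bdd_const (-2)) ?_
      refine gw_sum _ fun j _ => gw_sum _ fun β _ => ?_
      induction β using Fin.lastCases with
      | last => exact gw_zero' fun x _ => by simp [hΓN, sΓ_llx]
      | cast c =>
        exact gw_bdd_mul ((bddc (hPdom.1 i j)).mul (bddc (cd_dphi hφ j c.castSucc)))
          (hgΓtt c b)
  -- Part 2 of A
  · refine gw_sum _ fun ϑ _ => ?_
    induction ϑ using Fin.lastCases with
    | last =>
      refine gw_mul_bdd (hgu (k-2) le_rfl) (bddc ?_)
      refine ContDiff.sub ?_ ?_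
      · exact ContDiff.sum fun β _ =>
          (cdlapφ β).mul (cdΓφ (Fin.last d) β (Fin.last d))
      · exact ContDiff.sum fun i _ => ContDiff.sum fun j _ => ContDiff.sum fun β _ =>
          ContDiff.sum fun ω _ =>
            (((hPdom.1 i j).mul (cd_dphi hφ j β)).mul (cd_dphi hφ i ω)).mul
              (cd_Scoefφ hΓN hφ hchart hgt hΓt (Fin.last d) β ω (Fin.last d))
    | cast b =>
      refine gw_bdd_mul (bddc (cdu (k-2) b.castSucc)) (GoodW.sub ?_ ?_)
      · refine gw_sum _ fun β _ => ?_
        induction β using Fin.lastCases with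
        | last => exact gw_zero' fun x _ => by simp [hΓN, sΓ_llx]
        | cast c => exact gw_bdd_mul (bddc (cdlapφ c.castSucc)) (hgΓtt c b)
      · refine gw_sum _ fun i _ => gw_sum _ fun j _ => gw_sum _ fun β _ =>
          gw_sum _ fun ω _ => ?_
        induction ω using Fin.lastCases with
        | last =>
          exact gw_mul_bdd (gw_bdd_mul
            ((bddc (hPdom.1 i j)).mul (bddc (cd_dphi hφ j β))) (hgdphiL i))
            (bddc (cdS (Fin.last d) β (Fin.last d) b.castSucc))
        | cast w =>
          induction β using Fin.lastCases with
          | last =>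
            exact gw_mul_bdd (gw_mul_bdd
              (gw_bdd_mul (bddc (hPdom.1 i j)) (hgdphiL j))
              (bddc (cd_dphi hφ i w.castSucc)))
              (bddc (cdS (Fin.last d) (Fin.last d) w.castSucc b.castSucc))
          | cast p =>
            exact gw_bdd_mul
              (((bddc (hPdom.1 i j)).mul (bddc (cd_dphi hφ j p.castSucc))).mul
                (bddc (cd_dphi hφ i w.castSucc)))
              (hgS p w b)
  -- the u_{k-2} ⟨dφ,dφ⟩ R term
  · refine gw_sum _ fun δ _ => gw_sum _ fun γ _ => gw_sum _ fun β _ => ?_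
    induction δ using Fin.lastCases with
    | last =>
      exact gw_mul_bdd (gw_mul_bdd (hgu (k-2) le_rfl) (bddc (cddp γ β)))
        (bddc (cdR (Fin.last d) β γ (Fin.last d)))
    | cast dd =>
      induction γ using Fin.lastCases with
      | last =>
        exact gw_mul_bdd (gw_bdd_mul (bddc (cdu (k-2) dd.castSucc)) (hgdpairL β))
          (bddc (cdR (Fin.last d) β (Fin.last d) dd.castSucc))
      | cast gg =>
        induction β using Fin.lastCases with
        | last =>
          exact gw_mul_bdd (gw_bdd_mul (bddc (cdu (k-2) dd.castSucc)) (hgdpairR gg.castSucc))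
            (bddc (cdR (Fin.last d) (Fin.last d) gg.castSucc dd.castSucc))
        | cast bb =>
          refine gw_zero' fun x _ => ?_
          rw [Rc_tang_zero hΓN hgt hLC (φ x) bb gg dd]
          ring
  -- the ℓ-sum
  · refine gw_sum _ fun ℓ hℓ => ?_
    rw [Finset.mem_Icc] at hℓ
    have ha1 : k/2 - ℓ - 1 ≤ k - 2 := by omega
    have ha1' : k/2 - ℓ - 1 ≤ k - 3 := by omega
    have ha2 : k/2 + ℓ - 2 ≤ k - 2 := by omega
    have ha2' : k/2 + ℓ - 2 ≤ k - 3 := by omega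
    refine GoodW.add (GoodW.add ?_ ?_) ?_
    -- S1
    · refine gw_sum _ fun δ _ => gw_sum _ fun γ _ => gw_sum _ fun β _ => ?_
      induction δ using Fin.lastCases with
      | last =>
        exact gw_mul_bdd (gw_mul_bdd (hgu _ ha1) (bddc (cdvp _ γ β)))
          (bddc (cdR (Fin.last d) β γ (Fin.last d)))
      | cast dd =>
        induction γ using Fin.lastCases with
        | last =>
          exact gw_mul_bdd (gw_bdd_mul (bddc (cdu _ dd.castSucc)) (hgvpairL _ ha2' β))
            (bddc (cdR (Fin.last d) β (Fin.last d) dd.castSucc))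
        | cast gg =>
          induction β using Fin.lastCases with
          | last =>
            exact gw_mul_bdd (gw_bdd_mul (bddc (cdu _ dd.castSucc))
              (hgvpairR _ gg.castSucc))
              (bddc (cdR (Fin.last d) (Fin.last d) gg.castSucc dd.castSucc))
          | cast bb =>
            refine gw_zero' fun x _ => ?_
            rw [Rc_tang_zero hΓN hgt hLC (φ x) bb gg dd]
            ring
    -- S2
    · refine gw_sum _ fun ϑ _ => gw_sum _ fun δ _ => gw_sum _ fun η _ =>
        gw_sum _ fun β _ => ?_
      induction ϑ using Fin.lastCases with
      | last =>
        exact gw_mul_bdd (gw_mul_bdd (gw_mul_bdd (hgu _ ha2) (bddc (cdu _ δ)))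
          (bddc (cddp η β))) (bddc (cdE (Fin.last d) β δ (Fin.last d) η))
      | cast tt =>
        induction δ using Fin.lastCases with
        | last =>
          exact gw_mul_bdd (gw_mul_bdd (gw_bdd_mul (bddc (cdu _ tt.castSucc))
            (hgu _ ha1)) (bddc (cddp η β)))
            (bddc (cdE (Fin.last d) β (Fin.last d) tt.castSucc η))
        | cast δδ =>
          induction η using Fin.lastCases with
          | last =>
            exact gw_mul_bdd (gw_bdd_mul
              ((bddc (cdu _ tt.castSucc)).mul (bddc (cdu _ δδ.castSucc)))
              (hgdpairL β))
              (bddc (cdE (Fin.last d) β δδ.castSucc tt.castSucc (Fin.last d)))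
          | cast ηη =>
            induction β using Fin.lastCases with
            | last =>
              exact gw_mul_bdd (gw_bdd_mul
                ((bddc (cdu _ tt.castSucc)).mul (bddc (cdu _ δδ.castSucc)))
                (hgdpairR ηη.castSucc))
                (bddc (cdE (Fin.last d) (Fin.last d) δδ.castSucc tt.castSucc ηη.castSucc))
            | cast ββ =>
              exact gw_bdd_mul
                (((bddc (cdu _ tt.castSucc)).mul (bddc (cdu _ δδ.castSucc))).mul
                  (bddc (cddp ηη.castSucc ββ.castSucc)))
                (hgE ββ δδ tt ηη)
    -- S3
    · refine gw_sum _ fun δ _ => gw_sum _ fun γ _ => gw_sum _ fun β _ => ?_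
      induction δ using Fin.lastCases with
      | last =>
        exact gw_mul_bdd (gw_mul_bdd (hgu _ ha2) (bddc (cdvp _ γ β)))
          (bddc (cdR (Fin.last d) β γ (Fin.last d)))
      | cast dd =>
        induction γ using Fin.lastCases with
        | last =>
          exact gw_mul_bdd (gw_bdd_mul (bddc (cdu _ dd.castSucc)) (hgvpairL _ ha1' β))
            (bddc (cdR (Fin.last d) β (Fin.last d) dd.castSucc))
        | cast gg =>
          induction β using Fin.lastCases with
          | last =>
            exact gw_mul_bdd (gw_bdd_mul (bddc (cdu _ dd.castSucc))
              (hgvpairR _ gg.castSucc))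
              (bddc (cdR (Fin.last d) (Fin.last d) gg.castSucc dd.castSucc))
          | cast bb =>
            refine gw_zero' fun x _ => ?_
            rw [Rc_tang_zero hΓN hgt hLC (φ x) bb gg dd]
            ring

end Polyharm
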